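/- arXiv:1911.07536 — 2 statements merged into one kernel-verified Lean document; each statement's English description precedes it below -/
import Mathlib

section
/- There exists a finite weighted DAG G with source s, sink t, salience factor b and reward r such that G itself is not motivating but some proper subgraph of G containing s and t is motivating. (For instance, in the Bob example with b = 3 and r = 59, deleting the edge y → z of weight 3 yields a motivating subgraph.) -/
variable {V : Type*}

/-- Total weight of a walk given as its list of vertices. -/
def cost (w : V → V → ℝ) : List V → ℝ
  | u :: v :: rest => w u v + cost w (v :: rest)
  | _ => 0

/-- Perceived cost of a walk for an agent with salience factor `b`:
the first edge is scaled by `b`. -/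
def perceived (b : ℝ) (w : V → V → ℝ) : List V → ℝ
  | u :: v :: rest => b * w u v + cost w (v :: rest)
  | _ => 0

/-- `p` is a path (walk) in the digraph `E` ending at `t`. -/
def IsPathTo (E : V → V → Prop) (t : V) (p : List V) : Prop :=
  p.Chain' E ∧ p.getLast? = some t

/-- Perceived cost from `u` to the target `t`:
the infimum of perceived costs of `u`-`t` paths. -/
noncomputable def zeta (E : V → V → Prop) (w : V → V → ℝ) (b : ℝ) (t u : V) : ℝ :=
  sInf {c | ∃ p : List V, IsPathTo E t (u :: p) ∧ perceived b w (u :: p) = c}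

/-- Shortest-path distance from `u` to `t`. -/
noncomputable def distTo (E : V → V → Prop) (w : V → V → ℝ) (t u : V) : ℝ :=
  sInf {c | ∃ p : List V, IsPathTo E t (u :: p) ∧ cost w (u :: p) = c}

/-- One step of the present-biased agent: at `u` it does not abandon
(`ζ(u) ≤ r`) and moves to `v`, the second vertex of some `u`-`t` path of
minimum perceived cost. -/
noncomputable def Step (E : V → V → Prop) (w : V → V → ℝ) (b r : ℝ) (t u v : V) : Prop :=
  zeta E w b t u ≤ r ∧
    ∃ p : List V, IsPathTo E t (u :: v :: p) ∧ perceived b w (u :: v :: p) = zeta E w b t u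

/-- The instance is motivating: whenever the agent, having walked from `s`
following `Step`, finds itself at a vertex `u ≠ t`, it can take another step
(so it never abandons before reaching `t`). -/
noncomputable def Motivating (E : V → V → Prop) (w : V → V → ℝ) (b r : ℝ) (s t : V) : Prop :=
  ∀ (q : List V) (u : V), q.head? = some s → q.Chain' (Step E w b r t) →
    q.getLast? = some u → u ≠ t → ∃ v, Step E w b r t u v

/- ### Auxiliary construction -/

def E3 : Fin 3 → Fin 3 → Prop := fun u v =>
  (u = 0 ∧ v = 1) ∨ (u = 0 ∧ v = 2) ∨ (u = 1 ∧ v = 2)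

def E3' : Fin 3 → Fin 3 → Prop := fun u v => u = 0 ∧ v = 2

instance : DecidableRel E3 := fun u v =>
  inferInstanceAs (Decidable ((u = 0 ∧ v = 1) ∨ (u = 0 ∧ v = 2) ∨ (u = 1 ∧ v = 2)))
instance : DecidableRel E3' := fun u v => inferInstanceAs (Decidable (u = 0 ∧ v = 2))

noncomputable def w3 : Fin 3 → Fin 3 → ℝ := ![![0, 1, 3], ![0, 0, 4], ![0, 0, 0]]

lemma w3_01 : w3 0 1 = 1 := by norm_num [w3]
lemma w3_02 : w3 0 2 = 3 := by norm_num [w3]; rfl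
lemma w3_12 : w3 1 2 = 4 := by norm_num [w3]; rfl

lemma chain2_nil : ∀ p : List (Fin 3), List.Chain' E3 (2 :: p) → p = [] := by
  intro p h
  cases p with
  | nil => rfl
  | cons x xs =>
    have hx := (List.isChain_cons_cons.mp h).1
    exact absurd hx (by revert hx; fin_cases x <;> decide)

lemma p0 : ∀ p : List (Fin 3), IsPathTo E3 2 (0 :: p) ↔ p = [2] ∨ p = [1, 2] := by
  intro p
  constructor
  · rintro ⟨hc, hl⟩
    cases p with
    | nil => exact absurd hl (by decide)
    | cons x xs =>
      obtain ⟨hx, hc'⟩ := List.isChain_cons_cons.mp hc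
      fin_cases x
      · exact absurd hx (by decide)
      · cases xs with
        | nil => exact absurd hl (by decide)
        | cons y ys =>
          obtain ⟨hy, hc''⟩ := List.isChain_cons_cons.mp hc'
          fin_cases y
          · exact absurd hy (by decide)
          · exact absurd hy (by decide)
          · have : ys = [] := chain2_nil ys hc''
            subst this; right; rfl
      · have : xs = [] := chain2_nil xs hc'
        subst this; left; rfl
  · rintro (rfl | rfl)
    · exact ⟨List.isChain_pair.mpr (by decide), by decide⟩
    · exact ⟨List.isChain_cons_cons.mpr ⟨by decide, List.isChain_pair.mpr (by decide)⟩, by decide⟩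

lemma p1 : ∀ p : List (Fin 3), IsPathTo E3 2 (1 :: p) ↔ p = [2] := by
  intro p
  constructor
  · rintro ⟨hc, hl⟩
    cases p with
    | nil => exact absurd hl (by decide)
    | cons x xs =>
      obtain ⟨hx, hc'⟩ := List.isChain_cons_cons.mp hc
      fin_cases x
      · exact absurd hx (by decide)
      · exact absurd hx (by decide)
      · have : xs = [] := chain2_nil xs hc'
        subst this; rfl
  · rintro rfl; exact ⟨List.isChain_pair.mpr (by decide), by decide⟩

lemma p0' : ∀ p : List (Fin 3), IsPathTo E3' 2 (0 :: p) ↔ p = [2] := by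
  intro p
  constructor
  · rintro ⟨hc, hl⟩
    cases p with
    | nil => exact absurd hl (by decide)
    | cons x xs =>
      obtain ⟨hx, hc'⟩ := List.isChain_cons_cons.mp hc
      have hx2 : x = 2 := hx.2
      subst hx2
      cases xs with
      | nil => rfl
      | cons y ys =>
        have hy := (List.isChain_cons_cons.mp hc').1
        exact absurd hy.1 (by decide)
  · rintro rfl; exact ⟨List.isChain_pair.mpr (by decide), by decide⟩

lemma perc_02 : perceived 3 w3 [0, 2] = 9 := by
  simp [perceived, cost, w3_02]; norm_num

lemma perc_012 : perceived 3 w3 [0, 1, 2] = 7 := by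
  simp [perceived, cost, w3_01, w3_12]; norm_num

lemma perc_12 : perceived 3 w3 [1, 2] = 12 := by
  simp [perceived, cost, w3_12]; norm_num

lemma zeta0 : zeta E3 w3 3 2 0 = 7 := by
  have hset : {c | ∃ p : List (Fin 3), IsPathTo E3 2 (0 :: p) ∧ perceived 3 w3 (0 :: p) = c}
      = {9, 7} := by
    ext c
    simp only [Set.mem_setOf_eq, Set.mem_insert_iff, Set.mem_singleton_iff]
    constructor
    · rintro ⟨p, hp, rfl⟩
      rcases (p0 p).mp hp with rfl | rfl
      · left; exact perc_02
      · right; exact perc_012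
    · rintro (rfl | rfl)
      · exact ⟨[2], (p0 _).mpr (Or.inl rfl), perc_02⟩
      · exact ⟨[1, 2], (p0 _).mpr (Or.inr rfl), perc_012⟩
  rw [zeta, hset, csInf_pair]
  norm_num

lemma zeta1 : zeta E3 w3 3 2 1 = 12 := by
  have hset : {c | ∃ p : List (Fin 3), IsPathTo E3 2 (1 :: p) ∧ perceived 3 w3 (1 :: p) = c}
      = {12} := by
    ext c
    simp only [Set.mem_setOf_eq, Set.mem_singleton_iff]
    constructor
    · rintro ⟨p, hp, rfl⟩
      rcases (p1 p).mp hp with rfl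
      exact perc_12
    · rintro rfl
      exact ⟨[2], (p1 _).mpr rfl, perc_12⟩
  rw [zeta, hset, csInf_singleton]

lemma zeta0' : zeta E3' w3 3 2 0 = 9 := by
  have hset : {c | ∃ p : List (Fin 3), IsPathTo E3' 2 (0 :: p) ∧ perceived 3 w3 (0 :: p) = c}
      = {9} := by
    ext c
    simp only [Set.mem_setOf_eq, Set.mem_singleton_iff]
    constructor
    · rintro ⟨p, hp, rfl⟩
      rcases (p0' p).mp hp with rfl
      exact perc_02
    · rintro rfl
      exact ⟨[2], (p0' _).mpr rfl, perc_02⟩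
  rw [zeta, hset, csInf_singleton]

lemma last_of_chain {α : Type*} {R : α → α → Prop} :
    ∀ (q : List α) (s u : α), q.head? = some s → q.Chain' R → q.getLast? = some u →
      u = s ∨ ∃ x, R x u := by
  intro q
  induction q with
  | nil => intro s u h; simp at h
  | cons a q ih =>
    intro s u hh hc hl
    cases q with
    | nil =>
      simp only [List.head?_cons, Option.some.injEq] at hh
      simp only [List.getLast?_singleton, Option.some.injEq] at hl
      left; rw [← hl, ← hh]
    | cons b q' =>
      obtain ⟨hab, hc'⟩ := List.isChain_cons_cons.mp hc
      have hl' : (b :: q').getLast? = some u := by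
        rwa [List.getLast?_cons_cons] at hl
      rcases ih b u rfl hc' hl' with rfl | ⟨x, hx⟩
      · exact Or.inr ⟨a, hab⟩
      · exact Or.inr ⟨x, hx⟩

/-- There exists a finite weighted DAG with source `s`, sink `t`, salience
factor `b` and reward `r` that is not motivating, yet some proper subgraph
(containing `s` and `t`) is motivating. -/
theorem stmt_13 :
    ∃ (V : Type) (_ : Fintype V) (E : V → V → Prop) (w : V → V → ℝ)
      (s t : V) (b r : ℝ),
      (∃ f : V → ℕ, ∀ u v, E u v → f u < f v) ∧
      (∀ u v, 0 ≤ w u v) ∧ 1 ≤ b ∧ 0 ≤ r ∧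
      ¬ Motivating E w b r s t ∧
      ∃ E' : V → V → Prop, (∀ u v, E' u v → E u v) ∧ E' ≠ E ∧
        Motivating E' w b r s t := by
  refine ⟨Fin 3, inferInstance, E3, w3, 0, 2, 3, 9, ?_, ?_, by norm_num, by norm_num, ?_, E3', ?_, ?_, ?_⟩
  · refine ⟨fun u => u.val, ?_⟩
    intro u v h
    rcases h with ⟨h1, h2⟩ | ⟨h1, h2⟩ | ⟨h1, h2⟩ <;> subst h1 <;> subst h2 <;> decide
  · intro u v; fin_cases u <;> fin_cases v <;> norm_num [w3]
  · -- not motivating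
    intro h
    have step01 : Step E3 w3 3 9 2 0 1 := by
      refine ⟨by rw [zeta0]; norm_num, [2], (p0 _).mpr (Or.inr rfl), ?_⟩
      rw [zeta0]; exact perc_012
    obtain ⟨v, hv⟩ := h [0, 1] 1 rfl (List.isChain_pair.mpr step01) (by decide) (by decide)
    have := hv.1
    rw [zeta1] at this
    norm_num at this
  · intro u v h; exact Or.inr (Or.inl h)
  · intro h
    have : E3' 1 2 := h ▸ (Or.inr (Or.inr ⟨rfl, rfl⟩))
    exact absurd this.1 (by decide)
  · -- Motivating E3'
    intro q u hh hc hl hne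
    have hcase := last_of_chain q 0 u hh hc hl
    have hu : u = 0 := by
      rcases hcase with rfl | ⟨x, hx⟩
      · rfl
      · obtain ⟨_, p, ⟨hch, _⟩, _⟩ := hx
        have : E3' x u := (List.isChain_cons_cons.mp hch).1
        exact absurd this.2 hne
    subst hu
    refine ⟨2, by rw [zeta0'], [], (p0' _).mpr rfl, ?_⟩
    rw [zeta0']; exact perc_02
end

section
/- Let G be a DAG with edge weights, b ≥ 1, r ≥ 0, and suppose every vertex can reach t. Define d : V → ℝ∪{∞} by d(t) = 0 and d(u) = min over out-neighbors v of u with b·w(uv) + d(v) ≤ r of (w(uv) + d(v)), with d(u) = ∞ if no such neighbor exists. Then for every vertex u, d(u) equals the minimum total weight of a motivating u-t path in G (and d(u) = ∞ if and only if no motivating u-t path exists). -/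
variable {V : Type*}

/-- A walk is motivating for salience `b` and reward `r` if at every vertex
along it, the perceived cost of the remainder is at most `r`. -/
def MotivWalk (w : V → V → ℝ) (b r : ℝ) : List V → Prop
  | u :: v :: rest => b * w u v + cost w (v :: rest) ≤ r ∧ MotivWalk w b r (v :: rest)
  | _ => True


lemma cost_nonneg' (w : V → V → ℝ) (hw : ∀ u v, 0 ≤ w u v) :
    ∀ l : List V, 0 ≤ cost w l
  | [] => le_refl _
  | [_] => le_refl _
  | _ :: v :: rest => add_nonneg (hw _ _) (cost_nonneg' w hw (v :: rest))

lemma chain'_nodup (f : V → ℕ) (E : V → V → Prop) (hf : ∀ u v, E u v → f u < f v) :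
    ∀ {l : List V}, l.Chain' E → l.Nodup := by
  intro l hl
  haveI : IsTrans V (fun a b => f a < f b) := ⟨fun a b c h1 h2 => h1.trans h2⟩
  have h2 : l.Chain' (fun a b => f a < f b) := hl.imp (fun a b h => hf a b h)
  have h3 : l.Pairwise (fun a b => f a < f b) := List.isChain_iff_pairwise.1 h2
  exact h3.imp (fun h he => by subst he; exact lt_irrefl _ h)

/-- The dynamic-programming values `d` (with `d t = 0` and
`d u = min over out-neighbours v with b·w(uv) + d(v) ≤ r of (w(uv) + d(v))`,
`∞` if no such neighbour exists) equal, at every vertex `u`, the minimum total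
weight of a motivating `u`-`t` path, with `d u = ∞` iff no motivating `u`-`t`
path exists. -/
theorem stmt_14 [Fintype V] (E : V → V → Prop) (w : V → V → ℝ) (b r : ℝ) (t : V)
    (hb : 1 ≤ b) (hr : 0 ≤ r) (hw : ∀ u v, 0 ≤ w u v)
    (hdag : ∃ f : V → ℕ, ∀ u v, E u v → f u < f v)
    (hreach : ∀ u : V, ∃ p : List V, IsPathTo E t (u :: p))
    (d : V → EReal) (hdt : d t = 0)
    (hd : ∀ u, u ≠ t → d u =
      sInf {x : EReal | ∃ v, E u v ∧ (b : EReal) * (w u v : EReal) + d v ≤ (r : EReal) ∧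
        x = (w u v : EReal) + d v}) :
    ∀ u : V,
      d u = sInf {x : EReal | ∃ p : List V, IsPathTo E t (u :: p) ∧
          MotivWalk w b r (u :: p) ∧ x = (cost w (u :: p) : EReal)} ∧
      (d u = ⊤ ↔ ¬ ∃ p : List V, IsPathTo E t (u :: p) ∧ MotivWalk w b r (u :: p)) := by
  classical
  obtain ⟨f, hf⟩ := hdag
  set M := Finset.univ.sup f with hM
  have hfM : ∀ v : V, f v ≤ M := fun v => Finset.le_sup (Finset.mem_univ v)
  set S : V → Set EReal := fun u => {x : EReal | ∃ p : List V, IsPathTo E t (u :: p) ∧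
      MotivWalk w b r (u :: p) ∧ x = (cost w (u :: p) : EReal)} with hSdef
  have hSfin : ∀ u, (S u).Finite := by
    intro u
    apply Set.Finite.subset (Set.Finite.image (fun p => ((cost w (u :: p) : ℝ) : EReal))
      (List.finite_length_le V (Fintype.card V)))
    rintro x ⟨p, ⟨hc, _⟩, _, rfl⟩
    refine ⟨p, ?_, rfl⟩
    have hnd : (u :: p).Nodup := chain'_nodup f E hf hc
    have := hnd.length_le_card
    simp only [List.length_cons] at this
    simpa using Nat.le_of_succ_le this
  have key : ∀ n : ℕ, ∀ u : V, M - f u = n → d u = sInf (S u) := by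
    intro n
    induction n using Nat.strong_induction_on with
    | _ n IH =>
      intro u hu
      by_cases hut : u = t
      · subst hut
        rw [hdt]
        refine le_antisymm ?_ ?_
        · apply le_sInf
          rintro x ⟨p, _, _, rfl⟩
          exact_mod_cast EReal.coe_nonneg.2 (cost_nonneg' w hw _)
        · apply sInf_le
          refine ⟨[], ⟨List.isChain_singleton _, rfl⟩, trivial, ?_⟩
          simp [cost]
      · rw [hd u hut]
        have IHv : ∀ v, E u v → d v = sInf (S v) := fun v hv =>
          IH (M - f v) (by have h1 := hf u v hv; have h2 := hfM v; omega) v rfl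
        refine le_antisymm ?_ ?_
        · apply le_sInf
          rintro x ⟨p, hp, hm, rfl⟩
          cases p with
          | nil =>
            exfalso; apply hut
            have : (some u : Option V) = some t := hp.2
            exact Option.some.inj this
          | cons v rest =>
            obtain ⟨hmo1, hmo2⟩ : (b * w u v + cost w (v :: rest) ≤ r) ∧
                MotivWalk w b r (v :: rest) := hm
            have hE : E u v := hp.1.rel_head
            have hpath : IsPathTo E t (v :: rest) := ⟨hp.1.tail, by
              have h2 := hp.2; rwa [List.getLast?_cons_cons] at h2⟩
            have hmem : ((cost w (v :: rest) : ℝ) : EReal) ∈ S v := ⟨rest, hpath, hmo2, rfl⟩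
            have hdv : d v ≤ ((cost w (v :: rest) : ℝ) : EReal) := by
              rw [IHv v hE]; exact sInf_le hmem
            have hcond : (b : EReal) * (w u v : EReal) + d v ≤ (r : EReal) := by
              calc (b : EReal) * (w u v : EReal) + d v
                  ≤ (b : EReal) * (w u v : EReal) + ((cost w (v :: rest) : ℝ) : EReal) :=
                    add_le_add_right hdv _
                _ = ((b * w u v + cost w (v :: rest) : ℝ) : EReal) := by norm_cast
                _ ≤ (r : EReal) := EReal.coe_le_coe_iff.2 hmo1
            refine le_trans (sInf_le ⟨v, hE, hcond, rfl⟩) ?_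
            calc (w u v : EReal) + d v
                ≤ (w u v : EReal) + ((cost w (v :: rest) : ℝ) : EReal) := add_le_add_right hdv _
              _ = ((cost w (u :: v :: rest) : ℝ) : EReal) := by
                  show _ = ((w u v + cost w (v :: rest) : ℝ) : EReal)
                  norm_cast
        · apply le_sInf
          rintro x ⟨v, hE, hcond, rfl⟩
          have hvt : d v ≠ ⊤ := by
            intro h
            rw [h] at hcond
            have : ((b : EReal) * (w u v : EReal) + ⊤ : EReal) = ⊤ := by
              rw [EReal.add_top_iff_ne_bot]
              exact (EReal.coe_mul b (w u v)) ▸ EReal.coe_ne_bot _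
            rw [this] at hcond
            simp at hcond
          have hne : (S v).Nonempty := by
            by_contra h
            rw [Set.not_nonempty_iff_eq_empty] at h
            rw [IHv v hE, h, sInf_empty] at hvt
            exact hvt rfl
          have hmem := hne.csInf_mem (hSfin v)
          rw [← IHv v hE] at hmem
          obtain ⟨p, hpath, hmo, hdv⟩ := hmem
          apply sInf_le
          refine ⟨v :: p, ⟨List.isChain_cons_cons.2 ⟨hE, hpath.1⟩, by
            rw [List.getLast?_cons_cons]; exact hpath.2⟩, ⟨?_, hmo⟩, ?_⟩
          · have : ((b * w u v + cost w (v :: p) : ℝ) : EReal) ≤ (r : EReal) := by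
              rw [hdv] at hcond
              push_cast
              exact hcond
            exact EReal.coe_le_coe_iff.1 this
          · show (w u v : EReal) + d v = ((w u v + cost w (v :: p) : ℝ) : EReal)
            rw [hdv]; norm_cast
  intro u
  have hdu : d u = sInf (S u) := key (M - f u) u rfl
  constructor
  · exact hdu
  · constructor
    · intro htop ⟨p, h1, h2⟩
      have : sInf (S u) ≤ ((cost w (u :: p) : ℝ) : EReal) := sInf_le ⟨p, h1, h2, rfl⟩
      rw [← hdu, htop] at this
      simp at this
    · intro hno
      have : S u = ∅ := by
        rw [Set.eq_empty_iff_forall_notMem]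
        rintro x ⟨p, h1, h2, _⟩
        exact hno ⟨p, h1, h2⟩
      rw [hdu, this, sInf_empty]
end
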